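/- arXiv:0912.4771 — 2 statements merged into one kernel-verified Lean document; each statement's English description precedes it below -/
import Mathlib

section
/- Let ν be an ergodic shift-invariant probability on X, f : X → ℝ continuous, and A a Borel set with ν(A) > 0. Then there exists p ∈ A such that for every ε > 0 there exists an integer N > 0 with σ^N(p) ∈ A and |Σ_{i=0}^{N−1} f(σ^i p) − N ∫ f dν| < ε. Moreover the set of such p in A has full ν-measure in A. -/
open MeasureTheory Filter Real Topology
open scoped ENNReal

noncomputable section

abbrev X (d : ℕ) : Type := ℕ → Fin d

def shift {d : ℕ} (x : X d) : X d := fun n => x (n + 1)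

def birkhoff {d : ℕ} (f : X d → ℝ) (n : ℕ) (x : X d) : ℝ :=
  ∑ i ∈ Finset.range n, f (shift^[i] x)

def IsPeriodic {d : ℕ} (x : X d) : Prop := ∃ n, 0 < n ∧ shift^[n] x = x

def minPer {d : ℕ} (x : X d) : ℕ := Function.minimalPeriod shift x

def beta {d : ℕ} (f : X d → ℝ) : ℝ :=
  sSup {r : ℝ | ∃ μ : Measure (X d), IsProbabilityMeasure μ ∧ μ.map shift = μ ∧ r = ∫ x, f x ∂μ}

def Ifun {d : ℕ} (f : X d → ℝ) (x : X d) : ℝ :=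
  (minPer x : ℝ) * beta f - birkhoff f (minPer x) x

def dtheta {d : ℕ} (θ : ℝ) (x y : X d) : ℝ :=
  letI : Decidable (x = y) := Classical.dec _
  if h : x = y then 0 else θ ^ Nat.find (Function.ne_iff.mp h)

def LipWrt {d : ℕ} (θ C : ℝ) (f : X d → ℝ) : Prop :=
  ∀ x y, |f x - f y| ≤ C * dtheta θ x y

def periodize {d : ℕ} (n : ℕ) (w : Fin (n + 1) → Fin d) : X d :=
  fun i => w ⟨i % (n + 1), Nat.mod_lt i (Nat.succ_pos n)⟩

def pressure {d : ℕ} (g : X d → ℝ) : ℝ :=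
  Filter.limsup (fun n : ℕ =>
    Real.log (∑ w : Fin (n + 1) → Fin d, Real.exp (birkhoff g (n + 1) (periodize n w))) / ((n : ℝ) + 1))
    Filter.atTop

def zetaVal {d : ℕ} (f : X d → ℝ) (c s : ℝ) (k : X d → ℝ) : ℝ :=
  ∑' n : ℕ, ∑ w : Fin (n + 1) → Fin d,
    Real.exp (c * s * birkhoff f (n + 1) (periodize n w) - ((n : ℝ) + 1) * pressure (fun y => c * f y))
      * (birkhoff k (n + 1) (periodize n w) / ((n : ℝ) + 1))

def etaVal {d : ℕ} (f : X d → ℝ) (c : ℝ) (N : ℕ) (k : X d → ℝ) : ℝ :=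
  ∑ n ∈ Finset.range N, ∑ w : Fin (n + 1) → Fin d,
    Real.exp (c * birkhoff f (n + 1) (periodize n w)) * (birkhoff k (n + 1) (periodize n w) / ((n : ℝ) + 1))

def piVal {d : ℕ} (f : X d → ℝ) (c : ℝ) (N : ℕ) (k : X d → ℝ) : ℝ :=
  ∑ n ∈ Finset.range N, ∑ w : Fin (n + 1) → Fin d,
    Real.exp (c * birkhoff f (n + 1) (periodize n w) - ((n : ℝ) + 1) * pressure (fun y => c * f y))
      * (birkhoff k (n + 1) (periodize n w) / ((n : ℝ) + 1))

def cylSet {d : ℕ} (m : ℕ) (w : Fin m → Fin d) : Set (X d) :=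
  {x : X d | ∀ i : Fin m, x i = w i}

def Itilde {d : ℕ} (θ : ℝ) (f : X d → ℝ) (x : X d) : EReal :=
  ⨆ ε : {e : ℝ // 0 < e},
    sInf {r : EReal | ∃ y : X d, IsPeriodic y ∧ dtheta θ x y ≤ ε.1 ∧ r = ((Ifun f y : ℝ) : EReal)}

def orbitMeasure {d : ℕ} (x : X d) : Measure (X d) :=
  ((minPer x : ℝ≥0∞))⁻¹ • ∑ i ∈ Finset.range (minPer x), Measure.dirac (shift^[i] x)

section AtkinsonAux
open Finset

theorem sep_count {ε M : ℝ} (hε : 0 < ε) (φ : ℕ → ℝ) (R : Finset ℕ)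
    (hsep : ∀ m1 ∈ R, ∀ m2 ∈ R, m1 ≠ m2 → ε ≤ |φ m1 - φ m2|)
    (hM : 0 ≤ M) (hbd : ∀ m ∈ R, |φ m| ≤ M) : (R.card : ℝ) ≤ 2 * M / ε + 2 := by
  have key : ∀ m1 ∈ R, ∀ m2 ∈ R, φ m1 ≤ φ m2 → m1 ≠ m2 → ⌊φ m1 / ε⌋ < ⌊φ m2 / ε⌋ := by
    intro m1 h1 m2 h2 hle hne
    have hs := hsep m1 h1 m2 h2 hne
    rw [abs_sub_comm, abs_of_nonneg (by linarith)] at hs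
    have h1' : φ m1 / ε + 1 ≤ φ m2 / ε := by
      rw [div_add' _ _ _ hε.ne', div_le_div_iff_of_pos_right hε]; linarith
    have := Int.floor_le_floor (R := ℝ) h1'
    rw [Int.floor_add_one] at this
    omega
  have hinj : Set.InjOn (fun m => ⌊φ m / ε⌋) R := by
    intro m1 h1 m2 h2 heq
    by_contra hne
    rcases le_total (φ m1) (φ m2) with hle | hle
    · exact absurd heq (key m1 h1 m2 h2 hle hne).ne
    · exact absurd heq.symm (key m2 h2 m1 h1 hle (Ne.symm hne)).ne
  have hmaps : ∀ m ∈ R, ⌊φ m / ε⌋ ∈ Finset.Icc ⌊-M / ε⌋ ⌊M / ε⌋ := by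
    intro m hm
    rcases abs_le.mp (hbd m hm) with ⟨h1, h2⟩
    exact Finset.mem_Icc.mpr ⟨Int.floor_le_floor (div_le_div_of_nonneg_right h1 hε.le),
      Int.floor_le_floor (div_le_div_of_nonneg_right h2 hε.le)⟩
  have hcard := Finset.card_le_card_of_injOn _ hmaps hinj
  have hIcc : ((Finset.Icc ⌊-M / ε⌋ ⌊M / ε⌋).card : ℝ) ≤ 2 * M / ε + 2 := by
    rw [Int.card_Icc]
    have hmono : (⌊-M / ε⌋ : ℤ) ≤ ⌊M / ε⌋ := Int.floor_le_floor
      (div_le_div_of_nonneg_right (by linarith) hε.le)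
    have hnn : (0:ℤ) ≤ ⌊M / ε⌋ + 1 - ⌊-M / ε⌋ := by omega
    have hcast : (((⌊M / ε⌋ + 1 - ⌊-M / ε⌋).toNat : ℕ) : ℝ)
        = ((⌊M / ε⌋ : ℤ) : ℝ) + 1 - ((⌊-M / ε⌋ : ℤ) : ℝ) := by
      rw [show (((⌊M / ε⌋ + 1 - ⌊-M / ε⌋).toNat : ℕ) : ℝ)
          = ((((⌊M / ε⌋ + 1 - ⌊-M / ε⌋).toNat : ℕ) : ℤ) : ℝ) by push_cast; ring,
        Int.toNat_of_nonneg hnn]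
      push_cast; ring
    rw [hcast]
    have hfl1 : ((⌊M / ε⌋ : ℤ) : ℝ) ≤ M / ε := Int.floor_le _
    have hfl2 : -M / ε - 1 < ((⌊-M / ε⌋ : ℤ) : ℝ) := Int.sub_one_lt_floor _
    have : -M / ε = -(M / ε) := by ring
    have h2 : 2 * M / ε = M / ε + M / ε := by ring
    linarith
  calc ((R.card : ℕ) : ℝ) ≤ ((Finset.Icc ⌊-M / ε⌋ ⌊M / ε⌋).card : ℝ) := by exact_mod_cast hcard
    _ ≤ _ := hIcc

variable {d : ℕ} {μ : Measure (X d)} [IsProbabilityMeasure μ]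

theorem my_int_abs_le_norm (D : Lp ℝ 2 μ) : ∫ x, |D x| ∂μ ≤ ‖D‖ := by
  have h1 : eLpNorm (⇑D) 1 μ ≤ eLpNorm (⇑D) 2 μ :=
    eLpNorm_le_eLpNorm_of_exponent_le one_le_two (Lp.aestronglyMeasurable D)
  have h2 : ∫ x, |D x| ∂μ = (eLpNorm (⇑D) 1 μ).toReal := by
    rw [eLpNorm_one_eq_lintegral_enorm]
    rw [← integral_norm_eq_lintegral_enorm (Lp.aestronglyMeasurable D)]
    simp [Real.norm_eq_abs]
  rw [h2, Lp.norm_def]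
  exact ENNReal.toReal_mono (Lp.eLpNorm_ne_top D) h1

theorem shift_measurable : Measurable (shift (d := d)) :=
  measurable_pi_lambda _ (fun n => measurable_pi_apply (n+1))

theorem l2_mean_ergodic (hμ : Ergodic shift μ) (h : X d → ℝ) (hh : MemLp h 2 μ) :
    Tendsto (fun n => ∫ x, |birkhoffAverage ℝ shift h n x - ∫ y, h y ∂μ| ∂μ) atTop (𝓝 0) := by
  haveI : Fact ((1:ℝ≥0∞) ≤ 2) := ⟨one_le_two⟩
  set U : Lp ℝ 2 μ →L[ℝ] Lp ℝ 2 μ :=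
    (Lp.compMeasurePreservingₗᵢ ℝ shift hμ.toMeasurePreserving).toContinuousLinearMap with hUdef
  have hU : ‖U‖ ≤ 1 := LinearIsometry.norm_toContinuousLinearMap_le _
  set H : Lp ℝ 2 μ := hh.toLp h with hHdef
  have main := U.tendsto_birkhoffAverage_orthogonalProjection hU H
  set P : Lp ℝ 2 μ := ↑((U.eqLocus (1 : Lp ℝ 2 μ →L[ℝ] Lp ℝ 2 μ)).orthogonalProjectionOnto H) with hPdef
  have hUP : U P = P := ((U.eqLocus (1 : Lp ℝ 2 μ →L[ℝ] Lp ℝ 2 μ)).orthogonalProjectionOnto H).2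
  -- P is a.e. constant
  obtain ⟨c, hc⟩ : ∃ c, (P : X d →ₘ[μ] ℝ) = AEEqFun.const _ c := by
    refine hμ.eq_const_of_compMeasurePreserving_eq (g := (P : X d →ₘ[μ] ℝ)) ?_
    exact congrArg Subtype.val hUP
  have hPc : ⇑P =ᵐ[μ] fun _ => c := by
    rw [hc]; exact AEEqFun.coeFn_const _ _
  -- the constant function 1 is a fixed point
  have hone_mem : (memLp_const (1:ℝ) : MemLp (fun _ : X d => (1:ℝ)) 2 μ).toLp _ ∈
      U.eqLocus (1 : Lp ℝ 2 μ →L[ℝ] Lp ℝ 2 μ) := by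
    set one := (memLp_const (1:ℝ) : MemLp (fun _ : X d => (1:ℝ)) 2 μ).toLp _
    show U one = one
    refine Lp.ext ?_
    have h1 : ⇑(U one) =ᵐ[μ] ⇑one ∘ shift := Lp.coeFn_compMeasurePreserving one _
    have h2 : ⇑one =ᵐ[μ] fun _ => (1:ℝ) := MemLp.coeFn_toLp _
    have h3 : ⇑one ∘ shift =ᵐ[μ] (fun _ => (1:ℝ)) ∘ shift :=
      ae_eq_comp' shift_measurable.aemeasurable h2
        (by rw [hμ.toMeasurePreserving.map_eq])
    calc ⇑(U one) =ᵐ[μ] ⇑one ∘ shift := h1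
      _ =ᵐ[μ] (fun _ => (1:ℝ)) ∘ shift := h3
      _ = fun _ => (1:ℝ) := rfl
      _ =ᵐ[μ] ⇑one := h2.symm
  -- identify the constant with the integral
  have hHc : ⇑H =ᵐ[μ] h := MemLp.coeFn_toLp _
  have hint : Integrable h μ := hh.integrable one_le_two
  have hceq : c = ∫ y, h y ∂μ := by
    have horth := Submodule.starProjection_inner_eq_zero (𝕜 := ℝ) H _ hone_mem
    rw [L2.inner_def] at horth
    have hae : (fun x => inner ℝ (((H - P : Lp ℝ 2 μ)) x)
          (((memLp_const (1:ℝ) : MemLp (fun _ : X d => (1:ℝ)) 2 μ).toLp _ : Lp ℝ 2 μ) x) : X d → ℝ)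
        =ᵐ[μ] fun x => h x - c := by
      filter_upwards [Lp.coeFn_sub H P, hHc, hPc,
        (MemLp.coeFn_toLp (memLp_const (1:ℝ)) : _ =ᵐ[μ] fun _ : X d => (1:ℝ))] with x h1 h2 h3 h4
      have hxx : (inner ℝ ((H - P : Lp ℝ 2 μ) x)
          (((memLp_const (1:ℝ) : MemLp (fun _ : X d => (1:ℝ)) 2 μ).toLp _ : Lp ℝ 2 μ) x) : ℝ)
          = ((H - P : Lp ℝ 2 μ) x) * (((memLp_const (1:ℝ) : MemLp (fun _ : X d => (1:ℝ)) 2 μ).toLp _ : Lp ℝ 2 μ) x) := by simp [RCLike.inner_apply, mul_comm]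
      rw [hxx, h1, h4, Pi.sub_apply, h2, h3]
      ring
    change ∫ a, inner ℝ ((H - P : Lp ℝ 2 μ) a) _ ∂μ = 0 at horth
    rw [integral_congr_ae hae] at horth
    have := integral_sub hint (integrable_const c)
    rw [this] at horth
    simp at horth
    linarith
  -- coeFn of iterates
  have hiter : ∀ k : ℕ, ⇑((⇑U)^[k] H) =ᵐ[μ] fun x => h (shift^[k] x) := by
    intro k
    induction k with
    | zero => simpa using hHc
    | succ k ih =>
      rw [Function.iterate_succ_apply']
      have h1 : ⇑(U ((⇑U)^[k] H)) =ᵐ[μ] ⇑((⇑U)^[k] H) ∘ shift :=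
        Lp.coeFn_compMeasurePreserving _ _
      have h2 : ⇑((⇑U)^[k] H) ∘ shift =ᵐ[μ] (fun x => h (shift^[k] x)) ∘ shift :=
        ae_eq_comp' shift_measurable.aemeasurable ih
          (by rw [hμ.toMeasurePreserving.map_eq])
      refine h1.trans (h2.trans (Filter.Eventually.of_forall fun x => ?_))
      exact congrArg h (Function.iterate_succ_apply shift k x).symm
  have hsum : ∀ n : ℕ, ⇑(birkhoffSum (⇑U) id n H) =ᵐ[μ] birkhoffSum shift h n := by
    intro n
    induction n with
    | zero =>
      filter_upwards [Lp.coeFn_zero (E := ℝ) (p := 2) (μ := μ)] with x hx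
      simpa [birkhoffSum] using hx
    | succ n ih =>
      filter_upwards [Lp.coeFn_add (birkhoffSum (⇑U) id n H) ((⇑U)^[n] H), ih, hiter n]
        with x h1 h2 h3
      simp only [birkhoffSum_succ, id]
      rw [h1, Pi.add_apply, h2, h3]
  have hcoe : ∀ n : ℕ, ⇑(birkhoffAverage ℝ (⇑U) id n H) =ᵐ[μ] birkhoffAverage ℝ shift h n := by
    intro n
    filter_upwards [Lp.coeFn_smul ((n:ℝ)⁻¹) (birkhoffSum (⇑U) id n H), hsum n] with x h1 h2
    simp only [birkhoffAverage]
    rw [h1, Pi.smul_apply, h2]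
  rw [← hceq]
  have hnorm : Tendsto (fun n => ‖birkhoffAverage ℝ (⇑U) id n H - P‖) atTop (𝓝 0) :=
    tendsto_iff_norm_sub_tendsto_zero.mp main
  refine squeeze_zero (fun n => integral_nonneg fun x => abs_nonneg _) (fun n => ?_) hnorm
  have heq : ∫ x, |birkhoffAverage ℝ shift h n x - c| ∂μ
      = ∫ x, |(birkhoffAverage ℝ (⇑U) id n H - P : Lp ℝ 2 μ) x| ∂μ := by
    refine integral_congr_ae ?_
    filter_upwards [Lp.coeFn_sub (birkhoffAverage ℝ (⇑U) id n H) P, hcoe n, hPc] with x h1 h2 h3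
    rw [h1, Pi.sub_apply, h2, h3]
  rw [heq]
  exact my_int_abs_le_norm _

theorem shift_continuous {d : ℕ} : Continuous (shift (d := d)) :=
  continuous_pi (fun n => continuous_apply (n+1))

theorem birkhoff_eq {d : ℕ} (f : X d → ℝ) (n : ℕ) (x : X d) :
    birkhoff f n x = birkhoffSum shift f n x := rfl

theorem birkhoff_continuous {d : ℕ} (f : X d → ℝ) (hf : Continuous f) (n : ℕ) :
    Continuous (fun x => birkhoff f n x) := by
  unfold birkhoff
  exact continuous_finset_sum _ fun i _ => hf.comp (shift_continuous.iterate i)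

theorem key_zero {d : ℕ} {μ : Measure (X d)} [IsProbabilityMeasure μ]
    (hμ : Ergodic shift μ) (f : X d → ℝ) (hf : Continuous f)
    {ε : ℝ} (hε : 0 < ε) {B : Set (X d)} (hBm : MeasurableSet B)
    (hB : ∀ p ∈ B, ∀ N : ℕ, 0 < N → shift^[N] p ∈ B →
      ε ≤ |birkhoff f N p - (N:ℝ) * ∫ x, f x ∂μ|) : μ B = 0 := by
  classical
  by_contra hB0
  set c := ∫ x, f x ∂μ with hcdef
  set b := (μ B).toReal with hbdef
  have hb : 0 < b := ENNReal.toReal_pos hB0 (measure_ne_top μ B)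
  have hcontmem : ∀ h : X d → ℝ, Continuous h → MemLp h 2 μ := fun h hh => by
    obtain ⟨C, hC⟩ := isCompact_univ.exists_bound_of_continuousOn hh.continuousOn
    exact (memLp_top_of_bound hh.measurable.aestronglyMeasurable C
      (.of_forall fun x => hC x trivial)).mono_exponent le_top
  have hcontint : ∀ h : X d → ℝ, Continuous h → Integrable h μ :=
    fun h hh => (hcontmem h hh).integrable one_le_two
  have hshiftm : ∀ m : ℕ, Measurable ((shift (d := d))^[m]) := fun m => shift_measurable.iterate m
  have hSgcont : ∀ m : ℕ, Continuous (fun x => birkhoff f m x - (m:ℝ) * c) :=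
    fun m => (birkhoff_continuous f hf m).sub continuous_const
  have hSm : ∀ (m : ℕ) (M : ℝ), MeasurableSet {x : X d | M < |birkhoff f m x - (m:ℝ)*c|} :=
    fun m M => measurableSet_lt measurable_const (hSgcont m).abs.measurable
  set t : ℕ → ℝ := fun n => ∫ x, |birkhoffAverage ℝ shift f n x - c| ∂μ with htdef
  have htnn : ∀ m, 0 ≤ t m := fun m => integral_nonneg fun x => abs_nonneg _
  have ht : Tendsto t atTop (𝓝 0) := l2_mean_ergodic hμ f (hcontmem f hf)
  set g : X d → ℝ := B.indicator (fun _ => 1) with hgdef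
  have hgmem : MemLp g 2 μ := memLp_indicator_const 2 hBm 1 (Or.inr (measure_ne_top μ B))
  have hgint : ∫ x, g x ∂μ = b := by
    rw [hgdef, integral_indicator_const _ hBm]; simp [hbdef, Measure.real]
  have ht' : Tendsto (fun n => ∫ x, |birkhoffAverage ℝ shift g n x - b| ∂μ) atTop (𝓝 0) := by
    have h0 := l2_mean_ergodic hμ g hgmem
    simp only [hgint] at h0
    exact h0
  have hgcomp : ∀ m : ℕ, (fun x => g (shift^[m] x)) = (shift^[m] ⁻¹' B).indicator (fun _ => (1:ℝ)) := by
    intro m; funext x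
    by_cases hx : shift^[m] x ∈ B
    · simp [hgdef, Set.indicator_of_mem, hx, Set.mem_preimage]
    · simp [hgdef, Set.indicator_of_notMem, hx, Set.mem_preimage]
  have hgcompint : ∀ m : ℕ, Integrable (fun x => g (shift^[m] x)) μ := by
    intro m; rw [hgcomp m]
    exact (integrable_const (1:ℝ)).indicator ((hshiftm m) hBm)
  have hbSint : ∀ n : ℕ, Integrable (birkhoffSum shift g n) μ := by
    intro n
    have h0 : birkhoffSum shift g n = fun x => ∑ m ∈ range n, g (shift^[m] x) := rfl
    rw [h0]; exact integrable_finset_sum _ fun m _ => hgcompint m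
  have hset : ∀ n : ℕ, ∫ x in B, birkhoffSum shift g n x ∂μ
      = ∑ m ∈ Finset.range n, (μ (B ∩ shift^[m] ⁻¹' B)).toReal := by
    intro n
    calc ∫ x in B, birkhoffSum shift g n x ∂μ
        = ∑ m ∈ range n, ∫ x in B, g (shift^[m] x) ∂μ := by
          rw [show (fun x => birkhoffSum shift g n x) = fun x => ∑ m ∈ range n, g (shift^[m] x) from rfl]
          exact integral_finset_sum _ (fun m _ => (hgcompint m).integrableOn)
      _ = ∑ m ∈ range n, (μ (B ∩ shift^[m] ⁻¹' B)).toReal := by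
          refine Finset.sum_congr rfl fun m _ => ?_
          rw [hgcomp m, setIntegral_indicator ((hshiftm m) hBm), setIntegral_const]
          simp [Measure.real]
  have hcount : ∀ (n : ℕ) (x : X d), birkhoffSum shift g n x =
      (((Finset.range n).filter (fun m => shift^[m] x ∈ B)).card : ℝ) := by
    intro n x
    calc birkhoffSum shift g n x
        = ∑ m ∈ range n, (if shift^[m] x ∈ B then (1:ℝ) else 0) :=
          Finset.sum_congr rfl fun m _ => by simp [hgdef, Set.indicator_apply]
      _ = _ := by rw [Finset.sum_boole]
  -- cocycle separation
  have hsepm : ∀ (x : X d), ∀ m1 m2 : ℕ, m1 < m2 → shift^[m1] x ∈ B → shift^[m2] x ∈ B →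
      ε ≤ |(birkhoff f m2 x - (m2:ℝ)*c) - (birkhoff f m1 x - (m1:ℝ)*c)| := by
    intro x m1 m2 hlt h1B h2B
    have hco : birkhoff f m2 x = birkhoff f m1 x + birkhoff f (m2 - m1) (shift^[m1] x) := by
      have h0 := birkhoffSum_add shift f m1 (m2 - m1) x
      rw [Nat.add_sub_cancel' hlt.le] at h0
      exact h0
    have happ := hB (shift^[m1] x) h1B (m2 - m1) (Nat.sub_pos_of_lt hlt)
      (by rw [← Function.iterate_add_apply, Nat.sub_add_cancel hlt.le]; exact h2B)
    calc ε ≤ |birkhoff f (m2-m1) (shift^[m1] x) - ((m2 - m1 : ℕ):ℝ) * c| := happ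
      _ = |(birkhoff f m2 x - (m2:ℝ)*c) - (birkhoff f m1 x - (m1:ℝ)*c)| := by
          congr 1
          rw [hco, Nat.cast_sub hlt.le]; ring
  -- pointwise count bound
  have hpoint : ∀ M : ℝ, 0 ≤ M → ∀ x ∈ B, ∀ n : ℕ,
      birkhoffSum shift g n x ≤ 2 * M / ε + 2 +
        ∑ m ∈ Finset.range n, (if M < |birkhoff f m x - (m:ℝ)*c| then (1:ℝ) else 0) := by
    intro M hM x hx n
    rw [hcount]
    set R1 := (Finset.range n).filter
      (fun m => shift^[m] x ∈ B ∧ |birkhoff f m x - (m:ℝ)*c| ≤ M) with hR1def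
    set R2 := (Finset.range n).filter (fun m => M < |birkhoff f m x - (m:ℝ)*c|) with hR2def
    have hsub : (Finset.range n).filter (fun m => shift^[m] x ∈ B) ⊆ R1 ∪ R2 := by
      intro m hm
      rcases Finset.mem_filter.mp hm with ⟨hmr, hmB⟩
      rcases le_or_gt (|birkhoff f m x - (m:ℝ)*c|) M with h | h
      · exact Finset.mem_union_left _ (Finset.mem_filter.mpr ⟨hmr, hmB, h⟩)
      · exact Finset.mem_union_right _ (Finset.mem_filter.mpr ⟨hmr, h⟩)
    have hR2c : (R2.card : ℝ)
        = ∑ m ∈ range n, (if M < |birkhoff f m x - (m:ℝ)*c| then (1:ℝ) else 0) := by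
      rw [Finset.sum_boole]
    have hR1c : (R1.card : ℝ) ≤ 2*M/ε + 2 := by
      refine sep_count hε (fun m => birkhoff f m x - (m:ℝ) * c) R1 ?_ hM ?_
      · intro m1 h1 m2 h2 hne
        have h1B := (Finset.mem_filter.mp h1).2.1
        have h2B := (Finset.mem_filter.mp h2).2.1
        rcases hne.lt_or_gt with h | h
        · rw [abs_sub_comm]; exact hsepm x m1 m2 h h1B h2B
        · exact hsepm x m2 m1 h h2B h1B
      · intro m hm; exact (Finset.mem_filter.mp hm).2.2
    have hcard : ((Finset.range n).filter (fun m => shift^[m] x ∈ B)).card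
        ≤ R1.card + R2.card :=
      le_trans (Finset.card_le_card hsub) (Finset.card_union_le _ _)
    have hcard' : (((Finset.range n).filter (fun m => shift^[m] x ∈ B)).card : ℝ)
        ≤ (R1.card : ℝ) + (R2.card : ℝ) := by exact_mod_cast hcard
    linarith [hR1c, hR2c.ge, hcard']
  -- Chebyshev
  have hintSg : ∀ m : ℕ, 1 ≤ m → ∫ x, |birkhoff f m x - (m:ℝ)*c| ∂μ = (m:ℝ) * t m := by
    intro m hm
    have hm0 : ((m:ℝ)) ≠ 0 := by positivity
    have heq : (fun x => |birkhoff f m x - (m:ℝ)*c|)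
        = fun x => (m:ℝ) • |birkhoffAverage ℝ shift f m x - c| := by
      funext x
      have h1 : birkhoffAverage ℝ shift f m x = (m:ℝ)⁻¹ * birkhoff f m x := rfl
      rw [h1, smul_eq_mul, ← abs_of_nonneg (show (0:ℝ) ≤ (m:ℝ) by positivity), ← abs_mul]
      congr 1
      field_simp
      rw [abs_of_nonneg (by positivity)]; ring
    rw [heq, integral_smul]
    rw [show t m = ∫ x, |birkhoffAverage ℝ shift f m x - c| ∂μ from rfl, smul_eq_mul]
  have hcheb : ∀ (m : ℕ) (M : ℝ), 0 < M →
      (μ {x : X d | M < |birkhoff f m x - (m:ℝ)*c|}).toReal ≤ (m:ℝ) * t m / M := by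
    intro m M hM
    rcases Nat.eq_zero_or_pos m with rfl | hm
    · have hemp : {x : X d | M < |birkhoff f 0 x - (0:ℕ)*c|} = ∅ := by
        ext x; simp [birkhoff, not_lt.mpr hM.le]
      rw [hemp]; simp
    · have hint : Integrable (fun x => |birkhoff f m x - (m:ℝ)*c|) μ :=
        hcontint _ (hSgcont m).abs
      have hμle : M * (μ {x : X d | M < |birkhoff f m x - (m:ℝ)*c|}).toReal
          ≤ ∫ x, |birkhoff f m x - (m:ℝ)*c| ∂μ := by
        set S := {x : X d | M < |birkhoff f m x - (m:ℝ)*c|} with hSdef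
        calc M * (μ S).toReal = ∫ _ in S, M ∂μ := by rw [setIntegral_const]; simp [mul_comm, Measure.real]
          _ ≤ ∫ x in S, |birkhoff f m x - (m:ℝ)*c| ∂μ := by
              refine setIntegral_mono_on ((integrableOn_const (measure_ne_top μ S) enorm_ne_top))
                hint.integrableOn (hSm m M) (fun x hx => le_of_lt hx)
          _ ≤ ∫ x, |birkhoff f m x - (m:ℝ)*c| ∂μ :=
              setIntegral_le_integral hint (Filter.Eventually.of_forall fun x => abs_nonneg _)
      rw [← hintSg m hm]
      rw [le_div_iff₀ hM]
      linarith [hμle]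
  -- master inequality
  have hmaster : ∀ n : ℕ, ∀ M : ℝ, 0 < M →
      ∑ m ∈ Finset.range n, (μ (B ∩ shift^[m] ⁻¹' B)).toReal
        ≤ (2*M/ε + 2) * b + ∑ m ∈ Finset.range n, (m:ℝ) * t m / M := by
    intro n M hM
    rw [← hset n]
    set F : X d → ℝ := fun x => ∑ m ∈ range n,
      (if M < |birkhoff f m x - (m:ℝ)*c| then (1:ℝ) else 0) with hFdef
    have hFind : ∀ m : ℕ, (fun x => if M < |birkhoff f m x - (m:ℝ)*c| then (1:ℝ) else 0)
        = Set.indicator {x : X d | M < |birkhoff f m x - (m:ℝ)*c|} (fun _ => 1) := by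
      intro m; funext x; rw [Set.indicator_apply]; rfl
    have hFint : Integrable F μ := by
      rw [hFdef]
      refine integrable_finset_sum _ fun m _ => ?_
      rw [hFind m]
      exact (integrable_const (1:ℝ)).indicator (hSm m M)
    have hFnn : ∀ x, 0 ≤ F x := fun x =>
      Finset.sum_nonneg fun m _ => by positivity
    calc ∫ x in B, birkhoffSum shift g n x ∂μ
        ≤ ∫ x in B, (2*M/ε + 2 + F x) ∂μ := by
          refine setIntegral_mono_on (hbSint n).integrableOn
            (((integrable_const _).add hFint).integrableOn) hBm
            (fun x hx => hpoint M hM.le x hx n)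
      _ = (2*M/ε+2) * b + ∫ x in B, F x ∂μ := by
          rw [integral_add ((integrable_const (2*M/ε+2)))
            hFint.integrableOn, setIntegral_const]
          simp [hbdef, smul_eq_mul, mul_comm, Measure.real]
      _ ≤ (2*M/ε+2) * b + ∫ x, F x ∂μ := by
          have h0 : ∫ x in B, F x ∂μ ≤ ∫ x, F x ∂μ :=
            setIntegral_le_integral hFint (Filter.Eventually.of_forall hFnn)
          linarith
      _ ≤ (2*M/ε+2)*b + ∑ m ∈ range n, (m:ℝ)*t m/M := by
          have h0 : ∫ x, F x ∂μ
              = ∑ m ∈ range n, (μ {x : X d | M < |birkhoff f m x - (m:ℝ)*c|}).toReal := by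
            rw [hFdef, integral_finset_sum _ (fun m _ => by
              rw [hFind m]; exact (integrable_const (1:ℝ)).indicator (hSm m M))]
            refine Finset.sum_congr rfl fun m _ => ?_
            rw [hFind m, integral_indicator_const _ (hSm m M)]
            simp [Measure.real]
          rw [h0]
          have h1 := Finset.sum_le_sum (fun m (_ : m ∈ range n) => hcheb m M hM)
          linarith
  -- convergence of correlations
  set u : ℕ → ℝ := fun n => (n:ℝ)⁻¹ * ∑ m ∈ Finset.range n, (μ (B ∩ shift^[m] ⁻¹' B)).toReal
    with hudef
  have havgint : ∀ n : ℕ, Integrable (fun x => birkhoffAverage ℝ shift g n x) μ := by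
    intro n
    have h0 : (fun x => birkhoffAverage ℝ shift g n x)
        = fun x => (n:ℝ)⁻¹ • birkhoffSum shift g n x := rfl
    rw [h0]
    exact (hbSint n).smul ((n:ℝ)⁻¹)
  have hudiff : ∀ n : ℕ, 1 ≤ n →
      |u n - b*b| ≤ ∫ x, |birkhoffAverage ℝ shift g n x - b| ∂μ := by
    intro n hn
    have h1 : u n = ∫ x in B, birkhoffAverage ℝ shift g n x ∂μ := by
      have h0 : (fun x => birkhoffAverage ℝ shift g n x)
          = fun x => (n:ℝ)⁻¹ • birkhoffSum shift g n x := rfl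
      rw [hudef, h0, integral_smul, hset n, smul_eq_mul]
    have h2 : b*b = ∫ _ in B, b ∂μ := by rw [setIntegral_const]; simp [hbdef, smul_eq_mul, Measure.real]
    rw [h1, h2, ← integral_sub (havgint n).integrableOn
      ((integrableOn_const (measure_ne_top μ B) enorm_ne_top))]
    calc |∫ x in B, (birkhoffAverage ℝ shift g n x - b) ∂μ|
        ≤ ∫ x in B, |birkhoffAverage ℝ shift g n x - b| ∂μ := by
          simpa [Real.norm_eq_abs] using
            norm_integral_le_integral_norm (μ := μ.restrict B)
              (fun x => birkhoffAverage ℝ shift g n x - b)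
      _ ≤ ∫ x, |birkhoffAverage ℝ shift g n x - b| ∂μ := by
          refine setIntegral_le_integral ((havgint n).sub (integrable_const b)).abs
            (Filter.Eventually.of_forall fun x => abs_nonneg _)
  have hu : Tendsto u atTop (𝓝 (b*b)) := by
    rw [← tendsto_sub_nhds_zero_iff]
    refine squeeze_zero_norm' ?_ ht'
    filter_upwards [eventually_ge_atTop 1] with n hn
    simpa [Real.norm_eq_abs] using hudiff n hn
  -- Cesàro average of t
  have hv : Tendsto (fun n : ℕ => (n:ℝ)⁻¹ * ∑ m ∈ Finset.range n, t m) atTop (𝓝 0) := ht.cesaro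
  -- final contradiction
  set α : ℝ := ε * b / 8 with hαdef
  have hα : 0 < α := by positivity
  have hup : ∀ᶠ n in atTop, u n ≤ (2*α/ε)*b + 2*b*(n:ℝ)⁻¹
      + α⁻¹ * ((n:ℝ)⁻¹ * ∑ m ∈ Finset.range n, t m) := by
    filter_upwards [eventually_ge_atTop 1] with n hn
    have hn0 : (0:ℝ) < (n:ℝ) := by exact_mod_cast hn
    have hM := hmaster n (α * n) (by positivity)
    have hsum_le : ∑ m ∈ range n, (m:ℝ)*t m/(α*(n:ℝ)) ≤ (∑ m ∈ range n, t m) * α⁻¹ := by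
      rw [Finset.sum_mul]
      refine Finset.sum_le_sum fun m hm => ?_
      have hmn : (m:ℝ) ≤ (n:ℝ) := by
        exact_mod_cast (Finset.mem_range.mp hm).le
      have h1 : (m:ℝ)*t m ≤ (n:ℝ)*t m := mul_le_mul_of_nonneg_right hmn (htnn m)
      have h2 : (m:ℝ)*t m/(α*(n:ℝ)) ≤ (n:ℝ)*t m/(α*(n:ℝ)) :=
        div_le_div_of_nonneg_right h1 (by positivity) |>.trans_eq rfl
      refine h2.trans_eq ?_
      rw [mul_comm α (n:ℝ), mul_div_mul_left _ _ hn0.ne']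
      rw [div_eq_mul_inv]
    have h1 : u n ≤ (n:ℝ)⁻¹ * ((2*(α*(n:ℝ))/ε + 2) * b
        + ∑ m ∈ range n, (m:ℝ)*t m/(α*(n:ℝ))) := by
      rw [hudef]
      exact mul_le_mul_of_nonneg_left hM (by positivity)
    refine h1.trans ?_
    rw [mul_add]
    have h2 : (n:ℝ)⁻¹ * ((2*(α*(n:ℝ))/ε + 2) * b) = (2*α/ε)*b + 2*b*(n:ℝ)⁻¹ := by
      field_simp
    have h3 : (n:ℝ)⁻¹ * (∑ m ∈ range n, (m:ℝ)*t m/(α*(n:ℝ)))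
        ≤ α⁻¹ * ((n:ℝ)⁻¹ * ∑ m ∈ range n, t m) := by
      calc (n:ℝ)⁻¹ * (∑ m ∈ range n, (m:ℝ)*t m/(α*(n:ℝ)))
          ≤ (n:ℝ)⁻¹ * ((∑ m ∈ range n, t m) * α⁻¹) :=
            mul_le_mul_of_nonneg_left hsum_le (by positivity)
        _ = α⁻¹ * ((n:ℝ)⁻¹ * ∑ m ∈ range n, t m) := by ring
    linarith
  have hw : Tendsto (fun n : ℕ => (2*α/ε)*b + 2*b*(n:ℝ)⁻¹
      + α⁻¹ * ((n:ℝ)⁻¹ * ∑ m ∈ Finset.range n, t m)) atTop (𝓝 ((2*α/ε)*b + 2*b*0 + α⁻¹*0)) := by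
    exact ((tendsto_const_nhds).add ((tendsto_inv_atTop_nhds_zero_nat (𝕜 := ℝ)).const_mul (2*b))).add
      (hv.const_mul α⁻¹)
  have hle : b*b ≤ (2*α/ε)*b + 2*b*0 + α⁻¹*0 := le_of_tendsto_of_tendsto hu hw hup
  rw [hαdef] at hle
  have hεne : ε ≠ 0 := hε.ne'
  have : 2 * (ε*b/8) / ε = b/4 := by field_simp; ring
  rw [this] at hle
  nlinarith [hb]

end AtkinsonAux

set_option maxHeartbeats 1000000 in
theorem stmt1 (d : ℕ) (hd : 0 < d) (μ : Measure (X d)) [IsProbabilityMeasure μ]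
    (hμ : Ergodic shift μ) (f : X d → ℝ) (hf : Continuous f)
    (A : Set (X d)) (hA : MeasurableSet A) (hA0 : 0 < μ A) :
    (∃ p ∈ A, ∀ ε > (0 : ℝ), ∃ N : ℕ, 0 < N ∧ shift^[N] p ∈ A ∧
      |birkhoff f N p - (N : ℝ) * ∫ x, f x ∂μ| < ε) ∧
    μ (A \ {p : X d | ∀ ε > (0 : ℝ), ∃ N : ℕ, 0 < N ∧ shift^[N] p ∈ A ∧
      |birkhoff f N p - (N : ℝ) * ∫ x, f x ∂μ| < ε}) = 0 := by
  classical
  set c := ∫ x, f x ∂μ with hcdef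
  set Good : Set (X d) := {p : X d | ∀ ε > (0 : ℝ), ∃ N : ℕ, 0 < N ∧ shift^[N] p ∈ A ∧
      |birkhoff f N p - (N : ℝ) * c| < ε} with hGdef
  set Bk : ℕ → Set (X d) := fun k => A ∩ {p : X d | ∀ N : ℕ, 0 < N → shift^[N] p ∈ A →
      1/((k:ℝ)+1) ≤ |birkhoff f N p - (N : ℝ) * c|} with hBkdef
  have hBkm : ∀ k, MeasurableSet (Bk k) := by
    intro k
    refine hA.inter ?_
    have h0 : {p : X d | ∀ N : ℕ, 0 < N → shift^[N] p ∈ A →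
        1/((k:ℝ)+1) ≤ |birkhoff f N p - (N : ℝ) * c|}
        = ⋂ N : ℕ, {p : X d | 0 < N → shift^[N] p ∈ A →
          1/((k:ℝ)+1) ≤ |birkhoff f N p - (N : ℝ) * c|} := by
      ext p; simp [Set.mem_iInter]
    rw [h0]
    refine MeasurableSet.iInter fun N => ?_
    by_cases hN : 0 < N
    · have h1 : {p : X d | 0 < N → shift^[N] p ∈ A →
          1/((k:ℝ)+1) ≤ |birkhoff f N p - (N : ℝ) * c|}
          = (shift^[N] ⁻¹' A)ᶜ ∪ {p : X d | 1/((k:ℝ)+1) ≤ |birkhoff f N p - (N : ℝ) * c|} := by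
        ext p; simp [hN, imp_iff_not_or]
      rw [h1]
      exact (((shift_measurable.iterate N) hA).compl).union
        (measurableSet_le measurable_const
          ((birkhoff_continuous f hf N).sub continuous_const).abs.measurable)
    · have h1 : {p : X d | 0 < N → shift^[N] p ∈ A →
          1/((k:ℝ)+1) ≤ |birkhoff f N p - (N : ℝ) * c|} = Set.univ := by
        ext p; simp [hN]
      rw [h1]; exact MeasurableSet.univ
  have hBk0 : ∀ k, μ (Bk k) = 0 := by
    intro k
    refine key_zero hμ f hf (ε := 1/((k:ℝ)+1)) (by positivity) (hBkm k) ?_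
    intro p hp N hN hpN
    exact hp.2 N hN hpN.1
  have hsub : A \ Good ⊆ ⋃ k, Bk k := by
    intro p hp
    rcases hp with ⟨hpA, hpG⟩
    have hpG' : ∃ ε > (0:ℝ), ∀ N : ℕ, ¬(0 < N ∧ shift^[N] p ∈ A ∧
        |birkhoff f N p - (N : ℝ) * c| < ε) := by
      by_contra hcon
      push_neg at hcon
      exact hpG fun ε hε => hcon ε hε
    obtain ⟨ε, hε, hall⟩ := hpG'
    obtain ⟨k, hk⟩ := exists_nat_one_div_lt hε
    refine Set.mem_iUnion.mpr ⟨k, hpA, fun N hN hpN => ?_⟩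
    have := hall N
    push_neg at this
    have h2 := this hN hpN
    calc 1/((k:ℝ)+1) ≤ ε := hk.le
      _ ≤ |birkhoff f N p - (N : ℝ) * c| := h2
  have hnull : μ (A \ Good) = 0 :=
    measure_mono_null hsub (measure_iUnion_null fun k => hBk0 k)
  constructor
  · have hpos : 0 < μ (A ∩ Good) := by
      by_contra hcon
      push_neg at hcon
      have h0 : μ (A ∩ Good) = 0 := le_antisymm hcon zero_le
      have := measure_le_inter_add_diff μ A Good
      rw [h0, hnull] at this
      simp at this
      exact absurd this hA0.ne'
    obtain ⟨p, hpA, hpG⟩ := nonempty_of_measure_ne_zero hpos.ne'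
    exact ⟨p, hpA, hpG⟩
  · exact hnull
end
end

section
/- Let f : X → ℝ be Lipschitz with constant C for the metric d_θ. If p ∈ X and x is the periodic point obtained by infinitely repeating the first N symbols of p, and the first j symbols of σ^N(p) agree with the first j symbols of p, then |Σ_{i=0}^{N−1} f(σ^i p) − Σ_{i=0}^{N−1} f(σ^i x)| ≤ C θ^j · θ/(1−θ). -/
open MeasureTheory Filter Real Topology
open scoped ENNReal

noncomputable section

lemma shift_iter_apply {d : ℕ} (i : ℕ) (x : X d) (n : ℕ) :
    (shift^[i] x) n = x (n + i) := by
  induction i generalizing x with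
  | zero => rfl
  | succ k ih =>
      rw [Function.iterate_succ_apply, ih]
      simp [shift, Nat.add_assoc, Nat.add_comm 1 k]

lemma dtheta_le_pow {d : ℕ} (θ : ℝ) (hθ0 : 0 ≤ θ) (hθ1 : θ ≤ 1) (x y : X d) (m : ℕ)
    (h : ∀ k < m, x k = y k) : dtheta θ x y ≤ θ ^ m := by
  rw [dtheta]
  split_ifs with he
  · positivity
  · apply pow_le_pow_of_le_one hθ0 hθ1
    rw [Nat.le_find_iff]
    intro k hk hne
    exact hne (h k hk)

theorem stmt2 (d : ℕ) (hd : 0 < d) (θ C : ℝ) (hθ0 : 0 < θ) (hθ1 : θ < 1) (hC : 0 ≤ C)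
    (f : X d → ℝ) (hf : LipWrt θ C f) (p : X d) (N j : ℕ) (hN : 0 < N)
    (hagree : ∀ i < j, p (N + i) = p i) :
    |birkhoff f N p - birkhoff f N (fun i => p (i % N))| ≤ C * θ ^ j * (θ / (1 - θ)) := by
  set x : X d := fun i => p (i % N) with hx
  have hper : ∀ m, m < N + j → p m = p (m % N) := by
    intro m
    induction m using Nat.strong_induction_on with
    | _ m ih =>
      intro hm
      rcases lt_or_ge m N with h | h
      · rw [Nat.mod_eq_of_lt h]
      · have h1 : m - N < j := by omega
        have h2 : p m = p (m - N) := by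
          have := hagree (m - N) h1
          rwa [Nat.add_sub_cancel' h] at this
        rw [h2, ih (m - N) (by omega) (by omega), Nat.mod_eq_sub_mod h]
  have key : ∀ i ∈ Finset.range N,
      |f (shift^[i] p) - f (shift^[i] x)| ≤ C * (θ ^ j * θ ^ (N - i)) := by
    intro i hi
    rw [Finset.mem_range] at hi
    have hag : ∀ k < N - i + j, (shift^[i] p) k = (shift^[i] x) k := by
      intro k hk
      rw [shift_iter_apply, shift_iter_apply]
      show p (k + i) = p ((k + i) % N)
      exact hper (k + i) (by omega)
    calc |f (shift^[i] p) - f (shift^[i] x)| ≤ C * dtheta θ (shift^[i] p) (shift^[i] x) :=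
          hf _ _
      _ ≤ C * (θ ^ j * θ ^ (N - i)) := by
          rw [← pow_add]
          have := dtheta_le_pow θ hθ0.le hθ1.le (shift^[i] p) (shift^[i] x) (N - i + j) hag
          calc C * dtheta θ (shift^[i] p) (shift^[i] x) ≤ C * θ ^ (N - i + j) := by
                exact mul_le_mul_of_nonneg_left this hC
            _ = C * θ ^ (j + (N - i)) := by ring_nf
  have hsum : ∑ i ∈ Finset.range N, θ ^ (N - i) ≤ θ / (1 - θ) := by
    have hr : ∑ i ∈ Finset.range N, θ ^ (N - i) = ∑ i ∈ Finset.range N, θ ^ (i + 1) := by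
      rw [← Finset.sum_range_reflect]
      apply Finset.sum_congr rfl
      intro i hi
      rw [Finset.mem_range] at hi
      congr 1
      omega
    rw [hr]
    have : ∑ i ∈ Finset.range N, θ ^ (i + 1) = θ * ∑ i ∈ Finset.range N, θ ^ i := by
      rw [Finset.mul_sum]
      apply Finset.sum_congr rfl
      intro i _
      ring
    rw [this, geom_sum_eq (ne_of_lt hθ1)]
    rw [div_eq_mul_inv θ (1 - θ)]
    apply mul_le_mul_of_nonneg_left _ hθ0.le
    rw [show (θ ^ N - 1) / (θ - 1) = (1 - θ ^ N) / (1 - θ) by rw [div_eq_div_iff] <;> nlinarith]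
    rw [div_le_iff₀ (by linarith), inv_mul_cancel₀ (sub_ne_zero.mpr (by linarith))]
    nlinarith [pow_nonneg hθ0.le N]
  have h1 : birkhoff f N p - birkhoff f N x =
      ∑ i ∈ Finset.range N, (f (shift^[i] p) - f (shift^[i] x)) := by
    rw [birkhoff, birkhoff, Finset.sum_sub_distrib]
  calc |birkhoff f N p - birkhoff f N x|
      ≤ ∑ i ∈ Finset.range N, |f (shift^[i] p) - f (shift^[i] x)| := by
        rw [h1]; exact Finset.abs_sum_le_sum_abs _ _
    _ ≤ ∑ i ∈ Finset.range N, C * (θ ^ j * θ ^ (N - i)) := Finset.sum_le_sum key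
    _ = C * θ ^ j * ∑ i ∈ Finset.range N, θ ^ (N - i) := by
        rw [Finset.mul_sum]; apply Finset.sum_congr rfl; intro i _; ring
    _ ≤ C * θ ^ j * (θ / (1 - θ)) := by
        apply mul_le_mul_of_nonneg_left hsum
        positivity
end
end
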